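/- Let n₁, …, n_{m−1} be distinct squarefree integers greater than 1, and let n_m be a prime not dividing any of n₁, …, n_{m−1}. Then for every ε > 0 there exist infinitely many k ∈ ℕ such that, setting α = k√(n_m), the fractional part {α√nᵢ} lies in (1 − ε, 1) for every i = 1, …, m−1. -/

import Mathlib

open Real Complex

def Vset : List ℕ → Set ℝ
  | [] => Set.range (fun q : ℚ => (q : ℝ))
  | p :: l => {x | ∃ a ∈ Vset l, ∃ b ∈ Vset l, x = a + b * Real.sqrt p}

lemma Vset_rat (l : List ℕ) (q : ℚ) : (q : ℝ) ∈ Vset l := by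
  induction l generalizing q with
  | nil => exact ⟨q, rfl⟩
  | cons p l ih => exact ⟨q, ih q, (0:ℚ), ih 0, by push_cast; ring⟩

lemma Vset_zero (l : List ℕ) : (0 : ℝ) ∈ Vset l := by
  simpa using Vset_rat l 0

lemma Vset_one (l : List ℕ) : (1 : ℝ) ∈ Vset l := by
  simpa using Vset_rat l 1

lemma Vset_add (l : List ℕ) : ∀ x ∈ Vset l, ∀ y ∈ Vset l, x + y ∈ Vset l := by
  induction l with
  | nil =>
    rintro x ⟨a, rfl⟩ y ⟨b, rfl⟩
    exact ⟨a + b, by push_cast; ring⟩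
  | cons p l ih =>
    rintro x ⟨a, ha, b, hb, rfl⟩ y ⟨c, hc, d, hd, rfl⟩
    exact ⟨a + c, ih a ha c hc, b + d, ih b hb d hd, by ring⟩

lemma Vset_neg (l : List ℕ) : ∀ x ∈ Vset l, -x ∈ Vset l := by
  induction l with
  | nil => rintro x ⟨a, rfl⟩; exact ⟨-a, by push_cast; ring⟩
  | cons p l ih =>
    rintro x ⟨a, ha, b, hb, rfl⟩
    exact ⟨-a, ih a ha, -b, ih b hb, by ring⟩

lemma Vset_mul (l : List ℕ) : ∀ x ∈ Vset l, ∀ y ∈ Vset l, x * y ∈ Vset l := by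
  induction l with
  | nil =>
    rintro x ⟨a, rfl⟩ y ⟨b, rfl⟩
    exact ⟨a * b, by push_cast; ring⟩
  | cons p l ih =>
    rintro x ⟨a, ha, b, hb, rfl⟩ y ⟨c, hc, d, hd, rfl⟩
    have hp : Real.sqrt p * Real.sqrt p = (p : ℝ) := Real.mul_self_sqrt (by positivity)
    refine ⟨a * c + b * d * p, ?_, a * d + b * c, ?_, ?_⟩
    · exact Vset_add l _ (ih a ha c hc) _ (ih _ (ih b hb d hd) _ (by simpa using Vset_rat l p))
    · exact Vset_add l _ (ih a ha d hd) _ (ih b hb c hc)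
    · linear_combination (b * d) * hp

lemma Vset_mono {l : List ℕ} {p : ℕ} {x : ℝ} (hx : x ∈ Vset l) : x ∈ Vset (p :: l) :=
  ⟨x, hx, 0, Vset_zero l, by ring⟩

lemma Vset_nat (l : List ℕ) (k : ℕ) : (k : ℝ) ∈ Vset l := by
  simpa using Vset_rat l k

lemma Vset_sqrt_head (p : ℕ) (l : List ℕ) : Real.sqrt p ∈ Vset (p :: l) :=
  ⟨0, Vset_zero l, 1, Vset_one l, by ring⟩

lemma Vset_sub (l : List ℕ) : ∀ x ∈ Vset l, ∀ y ∈ Vset l, x - y ∈ Vset l := by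
  intro x hx y hy
  have := Vset_add l x hx (-y) (Vset_neg l y hy)
  rwa [← sub_eq_add_neg] at this


lemma not_isSquare_of_sf {m q : ℕ} (hm : Squarefree m) (hq : q.Prime) (hqm : q ∣ m) :
    ¬ IsSquare m := by
  rintro ⟨t, rfl⟩
  have ht : IsUnit t := hm t dvd_rfl
  rw [Nat.isUnit_iff] at ht
  subst ht
  exact hq.ne_one (Nat.dvd_one.mp (by simpa using hqm))

theorem Vset_key : ∀ (l : List ℕ), l.Nodup → (∀ p ∈ l, p.Prime) →
    ∀ (m : ℕ), Squarefree m → ∀ q : ℕ, q.Prime → q ∣ m → q ∉ l →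
    ∀ x ∈ Vset l, ∀ y ∈ Vset l, y ≠ 0 → Real.sqrt m * y ≠ x := by
  intro l
  induction l with
  | nil =>
    rintro - - m hm q hq hqm - x ⟨cx, rfl⟩ y ⟨cy, rfl⟩ hy0' heq
    have hirr : Irrational (Real.sqrt m) :=
      irrational_sqrt_natCast_iff.mpr (not_isSquare_of_sf hm hq hqm)
    refine hirr ⟨cx / cy, ?_⟩
    have hcy : (cy : ℝ) ≠ 0 := hy0'
    push_cast
    field_simp
    linarith [heq]
  | cons p l ih =>
    rintro hnd hpr m hm q hq hqm hql x ⟨x0, hx0, x1, hx1, rfl⟩ y ⟨y0, hy0, y1, hy1, rfl⟩ hy0' heq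
    have hlnd : l.Nodup := (List.nodup_cons.mp hnd).2
    have hpl : p ∉ l := (List.nodup_cons.mp hnd).1
    have hlpr : ∀ r ∈ l, r.Prime := fun r hr => hpr r (List.mem_cons_of_mem p hr)
    have hp : p.Prime := hpr p (List.mem_cons_self)
    have hm0 : m ≠ 0 := hm.ne_zero
    have hsm : 0 < Real.sqrt m := Real.sqrt_pos.mpr (by positivity)
    have hsp : 0 < Real.sqrt p := Real.sqrt_pos.mpr (by exact_mod_cast hp.pos)
    have hps : Real.sqrt p * Real.sqrt p = (p : ℝ) := Real.mul_self_sqrt (by positivity)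
    have hms : Real.sqrt m * Real.sqrt m = (m : ℝ) := Real.mul_self_sqrt (by positivity)
    have hqp : q ≠ p := fun h => hql (h ▸ List.mem_cons_self)
    have hql' : q ∉ l := fun h => hql (List.mem_cons_of_mem p h)
    set s := Real.sqrt p with hs
    set D := y0 * y0 - (p:ℝ) * (y1 * y1) with hD
    set E := x0 * y0 - (p:ℝ) * (x1 * y1) with hE
    set F := x1 * y0 - x0 * y1 with hF
    have hDm : D ∈ Vset l :=
      Vset_sub l _ (Vset_mul l _ hy0 _ hy0) _
        (Vset_mul l _ (Vset_nat l p) _ (Vset_mul l _ hy1 _ hy1))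
    have hEm : E ∈ Vset l :=
      Vset_sub l _ (Vset_mul l _ hx0 _ hy0) _
        (Vset_mul l _ (Vset_nat l p) _ (Vset_mul l _ hx1 _ hy1))
    have hFm : F ∈ Vset l :=
      Vset_sub l _ (Vset_mul l _ hx1 _ hy0) _ (Vset_mul l _ hx0 _ hy1)
    have key : Real.sqrt m * D = E + F * s := by
      linear_combination (y0 - y1 * s) * heq + (Real.sqrt m * (y1 * y1) - x1 * y1) * hps
    by_cases hDz : D = 0
    · have hy1z : y1 ≠ 0 := by
        intro h
        have h0 : y0 * y0 = 0 := by rw [hD, h] at hDz; linarith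
        have hy00 : y0 = 0 := by nlinarith
        exact hy0' (by simp [hy00, h])
      have hsq : (s * y1) * (s * y1) = y0 * y0 := by
        have h1 : y0 * y0 = (p:ℝ) * (y1 * y1) := by rw [hD] at hDz; linarith
        nlinarith [hps]
      rcases mul_self_eq_mul_self_iff.mp hsq with h | h
      · exact ih hlnd hlpr p hp.squarefree p hp dvd_rfl hpl y0 hy0 y1 hy1 hy1z h
      · exact ih hlnd hlpr p hp.squarefree p hp dvd_rfl hpl (-y0) (Vset_neg l _ hy0)
          y1 hy1 hy1z h
    · by_cases hFz : F = 0
      · exact ih hlnd hlpr m hm q hq hqm hql' E hEm D hDm hDz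
          (by rw [key, hFz]; ring)
      · by_cases hEz : E = 0
        · have key3 : Real.sqrt m * D = F * s := by rw [key, hEz]; ring
          by_cases hpm : p ∣ m
          · obtain ⟨m', rfl⟩ := hpm
            have hm' : Squarefree m' := hm.squarefree_of_dvd (Dvd.intro_left p rfl)
            have hqm' : q ∣ m' := (Nat.Coprime.dvd_of_dvd_mul_left
              ((Nat.coprime_primes hq hp).mpr hqp) hqm)
            have hsplit : Real.sqrt ((p * m' : ℕ)) = s * Real.sqrt m' := by
              rw [hs]; push_cast
              rw [Real.sqrt_mul (by positivity)]
            have hfin : Real.sqrt m' * D = F := by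
              have h2 : s * (Real.sqrt m' * D) = s * F := by
                rw [← mul_assoc, ← hsplit, mul_comm s F]
                exact key3
              exact mul_left_cancel₀ hsp.ne' h2
            exact ih hlnd hlpr m' hm' q hq hqm' hql' F hFm D hDm hDz hfin
          · have hcop : Nat.Coprime m p := Nat.Coprime.symm (hp.coprime_iff_not_dvd.mpr hpm)
            have hmp : Squarefree (m * p) := Nat.squarefree_mul_iff.mpr ⟨hcop, hm, hp.squarefree⟩
            have hsplit2 : Real.sqrt ((m * p : ℕ)) = Real.sqrt m * s := by
              rw [hs]; push_cast
              rw [Real.sqrt_mul (by positivity)]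
            have hfin : Real.sqrt ((m * p : ℕ)) * D = F * (p:ℝ) := by
              rw [hsplit2]
              linear_combination s * key3 + F * hps
            exact ih hlnd hlpr (m * p) hmp q hq (hqm.mul_right p) hql'
              (F * (p:ℝ)) (Vset_mul l _ hFm _ (Vset_nat l p)) D hDm hDz hfin
        · have key2 : s * (2 * (E * F)) =
              (m:ℝ) * (D * D) - E * E - (p:ℝ) * (F * F) := by
            linear_combination (-(Real.sqrt m * D + E + F * s)) * key
              + (D * D) * hms - (F * F) * hps
          have hyz : 2 * (E * F) ≠ 0 := by
            simp only [ne_eq, mul_eq_zero]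
            push_neg
            exact ⟨by norm_num, hEz, hFz⟩
          have h2m : (2 : ℝ) ∈ Vset l := by
            have := Vset_nat l 2
            simpa using this
          exact ih hlnd hlpr p hp.squarefree p hp dvd_rfl hpl
            ((m:ℝ) * (D * D) - E * E - (p:ℝ) * (F * F))
            (Vset_sub l _ (Vset_sub l _
              (Vset_mul l _ (Vset_nat l m) _ (Vset_mul l _ hDm _ hDm)) _
              (Vset_mul l _ hEm _ hEm)) _
              (Vset_mul l _ (Vset_nat l p) _ (Vset_mul l _ hFm _ hFm)))
            (2 * (E * F)) (Vset_mul l _ h2m _ (Vset_mul l _ hEm _ hFm)) hyz key2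


lemma Vset_sum {l : List ℕ} {ι : Type*} (S : Finset ι) (f : ι → ℝ)
    (hf : ∀ i ∈ S, f i ∈ Vset l) : (∑ i ∈ S, f i) ∈ Vset l := by
  classical
  induction S using Finset.induction_on with
  | empty => simpa using Vset_zero l
  | insert a s hnotmem ih =>
    rw [Finset.sum_insert hnotmem]
    exact Vset_add l _ (hf a (Finset.mem_insert_self a s)) _
      (ih fun i hi => hf i (Finset.mem_insert_of_mem hi))

lemma Vset_sqrt_mem : ∀ (l : List ℕ) (m : ℕ), m ≠ 0 → Squarefree m →
    (∀ q : ℕ, q.Prime → q ∣ m → q ∈ l) → Real.sqrt m ∈ Vset l := by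
  intro l
  induction l with
  | nil =>
    intro m hm0 hsf hfac
    have hm1 : m = 1 := by
      by_contra h
      obtain ⟨q, hq, hqd⟩ := Nat.exists_prime_and_dvd h
      exact absurd (hfac q hq hqd) (List.not_mem_nil)
    rw [hm1]
    simpa using Vset_one []
  | cons p l ih =>
    intro m hm0 hsf hfac
    by_cases hpm : p ∣ m
    · obtain ⟨m', rfl⟩ := hpm
      have hm' : Squarefree m' := hsf.squarefree_of_dvd (Dvd.intro_left p rfl)
      have hm'0 : m' ≠ 0 := fun h => hm0 (by simp [h])
      have hp : p ≠ 0 := fun h => hm0 (by simp [h])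
      have hfac' : ∀ q : ℕ, q.Prime → q ∣ m' → q ∈ l := by
        intro q hq hqd
        have hq2 : q ∣ p * m' := hqd.mul_left p
        rcases List.mem_cons.mp (hfac q hq hq2) with h | h
        · subst h
          obtain ⟨t, rfl⟩ := hqd
          exact absurd (hsf q ⟨t, by ring⟩) hq.prime.not_unit
        · exact h
      have hsub : Real.sqrt m' ∈ Vset l := ih m' hm'0 hm' hfac'
      refine ⟨0, Vset_zero l, Real.sqrt m', hsub, ?_⟩
      push_cast
      rw [Real.sqrt_mul (by positivity), mul_comm]
      ring
    · have hfac' : ∀ q : ℕ, q.Prime → q ∣ m → q ∈ l := by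
        intro q hq hqd
        rcases List.mem_cons.mp (hfac q hq hqd) with h | h
        · exact absurd (h ▸ hqd) hpm
        · exact h
      exact Vset_mono (ih m hm0 hsf hfac')


theorem Vset_indep : ∀ (l : List ℕ), l.Nodup → (∀ p ∈ l, p.Prime) →
    ∀ (S : Finset ℕ) (c : ℕ → ℚ),
    (∀ m ∈ S, m ≠ 0 ∧ Squarefree m ∧ ∀ q : ℕ, q.Prime → q ∣ m → q ∈ l) →
    (∑ m ∈ S, (c m : ℝ) * Real.sqrt m) = 0 → ∀ m ∈ S, c m = 0 := by
  intro l
  induction l with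
  | nil =>
    intro _ _ S c hS hsum m hm
    have h1 : ∀ m' ∈ S, m' = 1 := by
      intro m' hm'
      obtain ⟨h0, hsf, hfac⟩ := hS m' hm'
      by_contra h
      obtain ⟨q, hq, hqd⟩ := Nat.exists_prime_and_dvd h
      exact absurd (hfac q hq hqd) (List.not_mem_nil)
    have hmS : m = 1 := h1 m hm
    have hSsing : S = {1} := by
      apply Finset.eq_singleton_iff_unique_mem.mpr
      exact ⟨hmS ▸ hm, fun x hx => h1 x hx⟩
    rw [hSsing, Finset.sum_singleton] at hsum
    simp only [Nat.cast_one, Real.sqrt_one, mul_one] at hsum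
    rw [hmS]
    exact_mod_cast hsum
  | cons p l ih =>
    intro hnd hpr S c hS hsum
    have hlnd : l.Nodup := (List.nodup_cons.mp hnd).2
    have hpl : p ∉ l := (List.nodup_cons.mp hnd).1
    have hlpr : ∀ r ∈ l, r.Prime := fun r hr => hpr r (List.mem_cons_of_mem p hr)
    have hp : p.Prime := hpr p (List.mem_cons_self)
    have hp0 : p ≠ 0 := hp.ne_zero
    classical
    set S1 := S.filter (fun m => ¬ p ∣ m) with hS1
    set S2 := S.filter (fun m => p ∣ m) with hS2
    -- properties of members
    have hS1fac : ∀ m ∈ S1, m ≠ 0 ∧ Squarefree m ∧ ∀ q : ℕ, q.Prime → q ∣ m → q ∈ l := by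
      intro m hm
      rw [hS1, Finset.mem_filter] at hm
      obtain ⟨hmS, hnd'⟩ := hm
      obtain ⟨h0, hsf, hfac⟩ := hS m hmS
      refine ⟨h0, hsf, fun q hq hqd => ?_⟩
      rcases List.mem_cons.mp (hfac q hq hqd) with h | h
      · exact absurd (h ▸ hqd) hnd'
      · exact h
    have hS2fac : ∀ m ∈ S2, (m / p) ≠ 0 ∧ Squarefree (m / p) ∧
        (∀ q : ℕ, q.Prime → q ∣ (m / p) → q ∈ l) := by
      intro m hm
      rw [hS2, Finset.mem_filter] at hm
      obtain ⟨hmS, hdvd⟩ := hm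
      obtain ⟨h0, hsf, hfac⟩ := hS m hmS
      have hmp : p * (m / p) = m := Nat.mul_div_cancel' hdvd
      constructor
      · intro h; exact h0 (by rw [← hmp, h, mul_zero])
      constructor
      · exact hsf.squarefree_of_dvd (Nat.div_dvd_of_dvd hdvd)
      · intro q hq hqd
        rcases List.mem_cons.mp (hfac q hq (hqd.trans (Nat.div_dvd_of_dvd hdvd))) with h | h
        · subst h
          obtain ⟨t, ht⟩ := hqd
          have h2 : q * q ∣ m := ⟨t, by rw [← hmp, ht]; ring⟩
          exact absurd (hsf q h2) hq.prime.not_unit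
        · exact h
    set A := ∑ m ∈ S1, (c m : ℝ) * Real.sqrt m with hA
    set B := ∑ m ∈ S2, (c m : ℝ) * Real.sqrt (m / p : ℕ) with hB
    have hAm : A ∈ Vset l := by
      refine Vset_sum S1 _ (fun m hm => ?_)
      obtain ⟨h0, hsf, hfac⟩ := hS1fac m hm
      exact Vset_mul l _ (Vset_rat l (c m)) _ (Vset_sqrt_mem l m h0 hsf hfac)
    have hBm : B ∈ Vset l := by
      refine Vset_sum S2 _ (fun m hm => ?_)
      obtain ⟨h0, hsf, hfac⟩ := hS2fac m hm
      exact Vset_mul l _ (Vset_rat l (c m)) _ (Vset_sqrt_mem l _ h0 hsf hfac)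
    have hsplit : A + B * Real.sqrt p = 0 := by
      rw [← hsum, hA, hB, Finset.sum_mul]
      rw [← Finset.sum_filter_add_sum_filter_not S (fun m => p ∣ m)]
      rw [add_comm]
      congr 1
      apply Finset.sum_congr rfl
      intro m hm
      rw [Finset.mem_filter] at hm
      have hmp : (m / p) * p = m := Nat.div_mul_cancel hm.2
      rw [mul_assoc]
      congr 1
      rw [← Real.sqrt_mul (by positivity), ← Nat.cast_mul, hmp]
    have hB0 : B = 0 := by
      by_contra hBz
      exact Vset_key l hlnd hlpr p hp.squarefree p hp dvd_rfl hpl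
        (-A) (Vset_neg l _ hAm) B hBm hBz (by linarith [hsplit])
    have hA0 : A = 0 := by rw [hB0] at hsplit; linarith [hsplit]
    have hc1 : ∀ m ∈ S1, c m = 0 := ih hlnd hlpr S1 c hS1fac hA0
    have hc2 : ∀ m ∈ S2, c m = 0 := by
      have hinj : ∀ a ∈ S2, ∀ b ∈ S2, a / p = b / p → a = b := by
        intro a ha b hb hab
        rw [hS2, Finset.mem_filter] at ha hb
        rw [← Nat.mul_div_cancel' ha.2, ← Nat.mul_div_cancel' hb.2, hab]
      have himg : ∑ t ∈ S2.image (· / p), ((c (p * t) : ℚ) : ℝ) * Real.sqrt t = B := by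
        rw [Finset.sum_image hinj, hB]
        apply Finset.sum_congr rfl
        intro m hm
        rw [hS2, Finset.mem_filter] at hm
        rw [Nat.mul_div_cancel' hm.2]
      have := ih hlnd hlpr (S2.image (· / p)) (fun t => c (p * t)) ?_ (by rw [himg]; exact hB0)
      · intro m hm
        have : c (p * (m / p)) = 0 := this (m / p) (Finset.mem_image_of_mem _ hm)
        rw [hS2, Finset.mem_filter] at hm
        rwa [Nat.mul_div_cancel' hm.2] at this
      · intro t ht
        obtain ⟨m, hm, rfl⟩ := Finset.mem_image.mp ht
        exact hS2fac m hm
    intro m hm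
    by_cases hdvd : p ∣ m
    · exact hc2 m (by rw [hS2, Finset.mem_filter]; exact ⟨hm, hdvd⟩)
    · exact hc1 m (by rw [hS1, Finset.mem_filter]; exact ⟨hm, hdvd⟩)

theorem sqrt_combo_not_int (d : ℕ) (N : Fin d → ℕ) (hsf : ∀ i, Squarefree (N i))
    (h1 : ∀ i, 1 < N i) (hinj : Function.Injective N) (a : Fin d → ℤ) (ha : a ≠ 0) (z : ℤ) :
    ∑ i, (a i : ℝ) * Real.sqrt (N i) ≠ (z : ℝ) := by
  classical
  intro heq
  set S : Finset ℕ := insert 1 (Finset.image N Finset.univ) with hS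
  set c : ℕ → ℚ := fun t => if t = 1 then -z else
    ∑ i ∈ Finset.univ.filter (fun i => N i = t), (a i : ℚ) with hc
  have h1S : (1 : ℕ) ∉ Finset.image N Finset.univ := by
    simp only [Finset.mem_image, not_exists]
    intro i
    intro h
    rcases h with ⟨-, h⟩
    exact absurd h (h1 i).ne'
  have hcN : ∀ i, c (N i) = a i := by
    intro i
    have hne : N i ≠ 1 := (h1 i).ne'
    have hfilter : Finset.univ.filter (fun j => N j = N i) = {i} := by
      ext j
      simp [hinj.eq_iff]
    rw [hc]
    simp only [hne, if_false, hfilter, Finset.sum_singleton]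
  have hsum : ∑ m ∈ S, (c m : ℝ) * Real.sqrt m = 0 := by
    rw [hS, Finset.sum_insert h1S]
    have himg : ∑ m ∈ Finset.image N Finset.univ, (c m : ℝ) * Real.sqrt m
        = ∑ i, ((c (N i) : ℚ) : ℝ) * Real.sqrt (N i) := by
      rw [Finset.sum_image (fun x _ y _ h => hinj h)]
    rw [himg]
    have : ∑ i, ((c (N i) : ℚ) : ℝ) * Real.sqrt (N i)
        = ∑ i, (a i : ℝ) * Real.sqrt (N i) := by
      apply Finset.sum_congr rfl
      intro i _
      rw [hcN i]
      push_cast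
      ring
    rw [this, heq]
    have hc1 : c 1 = -z := by rw [hc]; simp
    rw [hc1]
    push_cast
    simp
  set P : ℕ := ∏ m ∈ S, m with hP
  have hSmem : ∀ m ∈ S, m ≠ 0 ∧ Squarefree m := by
    intro m hm
    rw [hS, Finset.mem_insert] at hm
    rcases hm with rfl | hm
    · exact ⟨one_ne_zero, squarefree_one⟩
    · obtain ⟨i, -, rfl⟩ := Finset.mem_image.mp hm
      exact ⟨by have := h1 i; omega, hsf i⟩
  have hP0 : P ≠ 0 := by
    rw [hP]
    exact Finset.prod_ne_zero_iff.mpr (fun m hm => (hSmem m hm).1)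
  set l : List ℕ := P.primeFactors.toList with hl
  have hnd : l.Nodup := Finset.nodup_toList _
  have hpr : ∀ p ∈ l, p.Prime := by
    intro p hp
    rw [hl, Finset.mem_toList] at hp
    exact Nat.prime_of_mem_primeFactors hp
  have hcov : ∀ m ∈ S, m ≠ 0 ∧ Squarefree m ∧ ∀ q : ℕ, q.Prime → q ∣ m → q ∈ l := by
    intro m hm
    obtain ⟨h0, hsf'⟩ := hSmem m hm
    refine ⟨h0, hsf', fun q hq hqd => ?_⟩
    rw [hl, Finset.mem_toList]
    exact Nat.mem_primeFactors.mpr ⟨hq, hqd.trans (Finset.dvd_prod_of_mem id hm), hP0⟩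
  have hzero := Vset_indep l hnd hpr S c hcov hsum
  obtain ⟨i, hi⟩ := Function.ne_iff.mp ha
  have hi' : a i ≠ 0 := by simpa using hi
  have hmem : N i ∈ S := by
    rw [hS]
    exact Finset.mem_insert_of_mem (Finset.mem_image_of_mem N (Finset.mem_univ i))
  have hz : c (N i) = 0 := hzero (N i) hmem
  rw [hcN i] at hz
  exact hi' (by exact_mod_cast hz)

noncomputable def efn (t : ℝ) : ℂ := Complex.exp (2 * (Real.pi : ℂ) * t * Complex.I)

lemma efn_add (s t : ℝ) : efn (s + t) = efn s * efn t := by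
  rw [efn, efn, efn, ← Complex.exp_add]
  congr 1
  push_cast
  ring

lemma efn_zero : efn 0 = 1 := by simp [efn]

lemma efn_abs (t : ℝ) : ‖efn t‖ = 1 := by
  rw [efn]
  have : 2 * (Real.pi : ℂ) * t * Complex.I = ((2 * Real.pi * t : ℝ) : ℂ) * Complex.I := by
    push_cast; ring
  rw [this, Complex.norm_exp_ofReal_mul_I]

lemma efn_nat_pow (k : ℕ) (t : ℝ) : efn t ^ k = efn (k * t) := by
  rw [efn, efn, ← Complex.exp_nat_mul]
  congr 1
  push_cast
  ring

lemma efn_sum {ι : Type*} (s : Finset ι) (f : ι → ℝ) :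
    efn (∑ i ∈ s, f i) = ∏ i ∈ s, efn (f i) := by
  simp only [efn]
  rw [← Complex.exp_sum]
  congr 1
  push_cast
  rw [Finset.mul_sum, Finset.sum_mul]

lemma efn_eq_one_iff (t : ℝ) : efn t = 1 ↔ ∃ z : ℤ, t = (z : ℝ) := by
  rw [efn, Complex.exp_eq_one_iff]
  constructor
  · rintro ⟨z, hz⟩
    refine ⟨z, ?_⟩
    have hI : (2 * (Real.pi : ℂ) * t * Complex.I) = ((2 * Real.pi * t : ℝ) : ℂ) * Complex.I := by
      push_cast; ring
    have hI2 : (z : ℂ) * (2 * (Real.pi : ℂ) * Complex.I) = ((z * (2 * Real.pi) : ℝ) : ℂ) * Complex.I := by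
      push_cast; ring
    rw [hI, hI2] at hz
    have h3 : 2 * Real.pi * t = (z : ℝ) * (2 * Real.pi) :=
      Complex.ofReal_inj.mp (mul_right_cancel₀ Complex.I_ne_zero hz)
    have h4 : 2 * Real.pi * t = 2 * Real.pi * (z : ℝ) := by linear_combination h3
    exact mul_left_cancel₀ (by positivity : (0:ℝ) < 2 * Real.pi).ne' h4
  · rintro ⟨z, rfl⟩
    exact ⟨z, by push_cast; ring⟩

lemma geom_bound (z : ℂ) (hz : z ≠ 1) (habs : ‖z‖ = 1) (K : ℕ) :
    ‖∑ k ∈ Finset.range K, z ^ k‖ ≤ 2 / ‖z - 1‖ := by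
  rw [geom_sum_eq hz]
  rw [norm_div]
  have h1 : ‖z ^ K - 1‖ ≤ 2 := by
    calc ‖z ^ K - 1‖ ≤ ‖z ^ K‖ + ‖(1:ℂ)‖ :=
      (norm_sub_le _ _)
    _ = 2 := by rw [norm_pow, habs, one_pow, norm_one]; norm_num
  have h2 : 0 < ‖z - 1‖ := by
    rw [norm_pos_iff]
    exact sub_ne_zero.mpr hz
  gcongr

lemma cos_pow_expand (n : ℕ) (y : ℝ) :
    ((Real.cos (Real.pi * y) ^ (2 * n) : ℝ) : ℂ)
      = (1 / 4 ^ n : ℂ) * ∑ j ∈ Finset.range (2 * n + 1),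
          ((2 * n).choose j : ℂ) * efn (((j : ℝ) - n) * y) := by
  have hcos : ((Real.cos (Real.pi * y) : ℝ) : ℂ) = Complex.cos ((Real.pi * y : ℝ) : ℂ) :=
    (Complex.ofReal_cos _).symm ▸ rfl
  set A : ℂ := Complex.exp (((Real.pi * y : ℝ) : ℂ) * Complex.I) with hA
  set B : ℂ := Complex.exp (-(((Real.pi * y : ℝ) : ℂ)) * Complex.I) with hB
  have hcos2 : ((Real.cos (Real.pi * y) : ℝ) : ℂ) = (A + B) / 2 := by
    rw [hcos, Complex.cos]
  have hpow : ((Real.cos (Real.pi * y) ^ (2 * n) : ℝ) : ℂ)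
      = (A + B) ^ (2 * n) / 4 ^ n := by
    rw [Complex.ofReal_pow, hcos2, div_pow]
    congr 1
    rw [pow_mul]
    norm_num
  rw [hpow, add_pow, Finset.sum_div, Finset.mul_sum]
  apply Finset.sum_congr rfl
  intro j hj
  have hj' : j ≤ 2 * n := Nat.lt_succ_iff.mp (Finset.mem_range.mp hj)
  have hAB : A ^ j * B ^ (2 * n - j) = efn (((j : ℝ) - n) * y) := by
    rw [hA, hB, ← Complex.exp_nat_mul, ← Complex.exp_nat_mul, ← Complex.exp_add, efn]
    congr 1
    have hcast : ((2 * n - j : ℕ) : ℂ) = 2 * (n : ℂ) - (j : ℂ) := by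
      push_cast [Nat.cast_sub hj']
      ring
    rw [hcast]
    push_cast
    ring
  rw [hAB]
  ring

theorem kron (d : ℕ) (θ : Fin d → ℝ)
    (hθ : ∀ a : Fin d → ℤ, a ≠ 0 → ∀ z : ℤ, ∑ i, (a i : ℝ) * θ i ≠ (z : ℝ))
    (ε : ℝ) (hε : 0 < ε) (hε2 : ε ≤ 1 / 2) :
    {k : ℕ | ∀ i, Int.fract ((k : ℝ) * θ i) ∈ Set.Ioo (1 - ε) 1}.Infinite := by
  classical
  set δ : ℝ := ε / 2 with hδ
  have hδ0 : 0 < δ := by positivity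
  have hδ4 : δ ≤ 1 / 4 := by rw [hδ]; linarith
  set c : ℝ := 1 - δ with hc
  set ρ : ℝ := Real.cos (Real.pi * δ) ^ 2 with hρ
  have hπδ0 : 0 < Real.pi * δ := by positivity
  have hπδhalf : Real.pi * δ ≤ Real.pi / 2 := by
    nlinarith [Real.pi_pos]
  have hcosδ_nonneg : 0 ≤ Real.cos (Real.pi * δ) := by
    apply Real.cos_nonneg_of_mem_Icc
    constructor
    · linarith [Real.pi_pos]
    · exact hπδhalf
  have hcosδ_lt : Real.cos (Real.pi * δ) < 1 := by
    have := Real.cos_lt_cos_of_nonneg_of_le_pi (le_refl 0)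
      (by linarith [Real.pi_pos] : Real.pi * δ ≤ Real.pi) hπδ0
    rwa [Real.cos_zero] at this
  have hρ0 : 0 ≤ ρ := sq_nonneg _
  have hρ1 : ρ < 1 := by rw [hρ]; nlinarith
  -- choose n
  obtain ⟨n, hn1, hn⟩ : ∃ n : ℕ, 1 ≤ n ∧ ((2 * n + 1 : ℝ)) ^ d * ρ ^ n < 1 := by
    have T : Filter.Tendsto (fun n : ℕ => (3:ℝ)^d * ((n : ℝ) ^ d * ρ ^ n))
        Filter.atTop (nhds 0) := by
      have := tendsto_pow_const_mul_const_pow_of_abs_lt_one d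
        (by rwa [_root_.abs_of_nonneg hρ0] : |ρ| < 1)
      simpa using this.const_mul ((3:ℝ)^d)
    have hev : ∀ᶠ n : ℕ in Filter.atTop, (3:ℝ)^d * ((n:ℝ)^d * ρ^n) < 1 := by
      have h01 : (0:ℝ) < 1 := one_pos
      exact T.eventually_lt_const h01
    obtain ⟨n, hn, hn1⟩ := (hev.and (Filter.eventually_ge_atTop 1)).exists
    refine ⟨n, hn1, ?_⟩
    have h2n : (2 * n + 1 : ℝ) ≤ 3 * n := by
      have : (1:ℝ) ≤ n := by exact_mod_cast hn1
      linarith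
    calc ((2 * n + 1 : ℝ)) ^ d * ρ ^ n ≤ (3 * (n:ℝ)) ^ d * ρ ^ n := by
          apply mul_le_mul_of_nonneg_right _ (pow_nonneg hρ0 n)
          exact pow_le_pow_left₀ (by positivity) h2n d
      _ = (3:ℝ)^d * ((n:ℝ)^d * ρ^n) := by rw [mul_pow]; ring
      _ < 1 := hn
  set C : ℕ := (2 * n).choose n with hC
  have hC0 : 0 < C := Nat.choose_pos (by omega)
  set κ : ℝ := ((C : ℝ) / 4 ^ n) ^ d with hκ
  have h4C : (4:ℝ)^n ≤ (2 * n + 1) * C := by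
    have hnat : 2 ^ (2 * n) ≤ (2 * n + 1) * C := by
      have hsum : ∑ m ∈ Finset.range (2 * n + 1), (2 * n).choose m = 2 ^ (2 * n) :=
        Nat.sum_range_choose (2 * n)
      have hle : ∀ m ∈ Finset.range (2 * n + 1), (2 * n).choose m ≤ C := by
        intro m _
        have := Nat.choose_le_middle m (2 * n)
        simpa [hC, Nat.mul_div_cancel_left n (by norm_num : 0 < 2)] using this
      calc 2 ^ (2 * n) = ∑ m ∈ Finset.range (2 * n + 1), (2 * n).choose m := hsum.symm
        _ ≤ (2 * n + 1) * C := by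
            have := Finset.sum_le_card_nsmul (Finset.range (2 * n + 1)) _ C hle
            simpa [Finset.card_range, smul_eq_mul] using this
    have : ((2:ℝ)) ^ (2 * n) ≤ ((2 * n + 1 : ℕ) : ℝ) * C := by exact_mod_cast hnat
    calc (4:ℝ)^n = 2 ^ (2 * n) := by rw [pow_mul]; norm_num
      _ ≤ ((2 * n + 1 : ℕ) : ℝ) * C := this
      _ = (2 * n + 1) * C := by push_cast; ring
  have hκρ : ρ ^ n < κ := by
    have h1 : (1 / (2 * (n:ℝ) + 1)) ≤ (C:ℝ) / 4 ^ n := by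
      rw [div_le_div_iff₀ (by positivity) (by positivity)]
      calc (1:ℝ) * 4 ^ n = 4 ^ n := by ring
        _ ≤ (2 * n + 1) * C := h4C
        _ = (C:ℝ) * (2 * (n:ℝ) + 1) := by ring
    have h2 : ρ ^ n < (1 / (2 * (n:ℝ) + 1)) ^ d := by
      rw [div_pow, one_pow, lt_div_iff₀ (by positivity)]
      calc ρ ^ n * (2 * (n:ℝ) + 1) ^ d = (2 * (n:ℝ) + 1) ^ d * ρ ^ n := by ring
        _ < 1 := by
            have : (2 * (n:ℝ) + 1) = ((2 * n + 1 : ℝ)) := by push_cast; ring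
            rw [this]; exact hn
    calc ρ ^ n < (1 / (2 * (n:ℝ) + 1)) ^ d := h2
      _ ≤ ((C:ℝ) / 4 ^ n) ^ d := pow_le_pow_left₀ (by positivity) h1 d
  have hκρ' : 0 < κ - ρ ^ n := by linarith
  -- the weight function
  set W : ℕ → ℝ := fun k => ∏ i, Real.cos (Real.pi * ((k:ℝ) * θ i - c)) ^ (2 * n) with hW
  have hWfac_nonneg : ∀ (k : ℕ) (i : Fin d),
      0 ≤ Real.cos (Real.pi * ((k:ℝ) * θ i - c)) ^ (2 * n) :=
    fun k i => Even.pow_nonneg ⟨n, by ring⟩ _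
  have hWfac_le_one : ∀ (k : ℕ) (i : Fin d),
      Real.cos (Real.pi * ((k:ℝ) * θ i - c)) ^ (2 * n) ≤ 1 := by
    intro k i
    rw [pow_mul]
    exact pow_le_one₀ (sq_nonneg _) (Real.cos_sq_le_one _)
  have hW0 : ∀ k, 0 ≤ W k := fun k => Finset.prod_nonneg (fun i _ => hWfac_nonneg k i)
  have hW1 : ∀ k, W k ≤ 1 := fun k =>
    Finset.prod_le_one (fun i _ => hWfac_nonneg k i) (fun i _ => hWfac_le_one k i)
  -- bad k bound
  have hbad : ∀ k : ℕ, (∃ i, δ ≤ |(k:ℝ) * θ i - c - round ((k:ℝ) * θ i - c)|) →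
      W k ≤ ρ ^ n := by
    intro k ⟨i₀, hi₀⟩
    set y : ℝ := (k:ℝ) * θ i₀ - c with hy
    set e : ℝ := y - round y with he
    have he2 : |e| ≤ 1 / 2 := abs_sub_round y
    have hcos_eq : Real.cos (Real.pi * y) ^ 2 = Real.cos (Real.pi * e) ^ 2 := by
      have : Real.pi * y = Real.pi * e + (round y : ℤ) * Real.pi := by
        rw [he]; push_cast; ring
      rw [this, Real.cos_add_int_mul_pi, mul_pow]
      have h1 : ((-1:ℝ) ^ (round y)) ^ 2 = 1 := by
        rcases Int.even_or_odd (round y) with h | h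
        · rw [h.neg_one_zpow]; norm_num
        · rw [h.neg_one_zpow]; norm_num
      rw [h1, one_mul]
    have hcos_le : Real.cos (Real.pi * e) ^ 2 ≤ ρ := by
      have habs : Real.cos (Real.pi * e) = Real.cos (Real.pi * |e|) := by
        rw [← Real.cos_abs, abs_mul, _root_.abs_of_pos Real.pi_pos]
      have hehalf : Real.pi * |e| ≤ Real.pi / 2 := by
        have := mul_le_mul_of_nonneg_left he2 Real.pi_pos.le
        linarith
      have hepi : Real.pi * |e| ≤ Real.pi := by linarith [Real.pi_pos]
      have hde : Real.pi * δ ≤ Real.pi * |e| :=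
        mul_le_mul_of_nonneg_left hi₀ Real.pi_pos.le
      have h1 : Real.cos (Real.pi * |e|) ≤ Real.cos (Real.pi * δ) :=
        Real.cos_le_cos_of_nonneg_of_le_pi (by positivity) hepi hde
      have h2 : 0 ≤ Real.cos (Real.pi * |e|) :=
        Real.cos_nonneg_of_mem_Icc ⟨by
          have h0 : (0:ℝ) ≤ Real.pi * |e| := by positivity
          linarith [Real.pi_pos], hehalf⟩
      rw [habs, hρ]
      exact pow_le_pow_left₀ h2 h1 2
    have hfac : Real.cos (Real.pi * y) ^ (2 * n) ≤ ρ ^ n := by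
      have hyρ : Real.cos (Real.pi * y) ^ 2 ≤ ρ := by rw [hcos_eq]; exact hcos_le
      rw [pow_mul]
      exact pow_le_pow_left₀ (sq_nonneg _) hyρ n
    calc W k = Real.cos (Real.pi * ((k:ℝ) * θ i₀ - c)) ^ (2 * n) *
        ∏ i ∈ Finset.univ.erase i₀, Real.cos (Real.pi * ((k:ℝ) * θ i - c)) ^ (2 * n) := by
          rw [hW]
          exact (Finset.mul_prod_erase Finset.univ _ (Finset.mem_univ i₀)).symm
      _ ≤ ρ ^ n * 1 := by
          apply mul_le_mul
          · exact hfac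
          · exact Finset.prod_le_one (fun i _ => hWfac_nonneg k i) (fun i _ => hWfac_le_one k i)
          · exact Finset.prod_nonneg (fun i _ => hWfac_nonneg k i)
          · exact pow_nonneg hρ0 n
      _ = ρ ^ n := mul_one _
  -- Fourier setup
  set J : Finset (Fin d → ℕ) := Fintype.piFinset (fun _ => Finset.range (2 * n + 1)) with hJ
  set β : (Fin d → ℕ) → ℝ := fun j => ∑ i, ((j i : ℝ) - n) * θ i with hβ
  set ζ : (Fin d → ℕ) → ℂ := fun j => efn (β j) with hζdef
  set γ : (Fin d → ℕ) → ℂ := fun j =>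
    (1 / (4:ℂ) ^ n) ^ d * (∏ i, ((2 * n).choose (j i) : ℂ)) *
      efn ((∑ i, ((j i : ℝ) - n)) * (-c)) with hγdef
  set j₀ : Fin d → ℕ := fun _ => n with hj₀def
  have W_eq : ∀ k : ℕ, ((W k : ℝ) : ℂ) = ∑ j ∈ J, γ j * ζ j ^ k := by
    intro k
    calc ((W k : ℝ) : ℂ)
        = ∏ i, ((Real.cos (Real.pi * ((k:ℝ) * θ i - c)) ^ (2 * n) : ℝ) : ℂ) := by
          rw [hW]; push_cast; rfl
      _ = ∏ i, ((1 / 4 ^ n : ℂ) * ∑ j ∈ Finset.range (2 * n + 1),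
            ((2 * n).choose j : ℂ) * efn (((j : ℝ) - n) * ((k:ℝ) * θ i - c))) :=
          Finset.prod_congr rfl (fun i _ => cos_pow_expand n _)
      _ = (1 / (4:ℂ) ^ n) ^ d * ∏ i, (∑ j ∈ Finset.range (2 * n + 1),
            ((2 * n).choose j : ℂ) * efn (((j : ℝ) - n) * ((k:ℝ) * θ i - c))) := by
          rw [Finset.prod_mul_distrib, Finset.prod_const, Finset.card_univ, Fintype.card_fin]
      _ = (1 / (4:ℂ) ^ n) ^ d * ∑ j ∈ J, ∏ i,
            (((2 * n).choose (j i) : ℂ) * efn (((j i : ℝ) - n) * ((k:ℝ) * θ i - c))) := by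
          rw [Finset.prod_univ_sum]
      _ = ∑ j ∈ J, γ j * ζ j ^ k := by
          rw [Finset.mul_sum]
          apply Finset.sum_congr rfl
          intro j hj
          rw [Finset.prod_mul_distrib]
          have hprod : ∏ i, efn (((j i : ℝ) - n) * ((k:ℝ) * θ i - c))
              = efn (∑ i, ((j i : ℝ) - n) * ((k:ℝ) * θ i - c)) := (efn_sum _ _).symm
          have hsum : ∑ i, ((j i : ℝ) - n) * ((k:ℝ) * θ i - c)
              = (k:ℝ) * β j + (∑ i, ((j i : ℝ) - n)) * (-c) := by
            rw [hβ, Finset.mul_sum, Finset.sum_mul, ← Finset.sum_add_distrib]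
            apply Finset.sum_congr rfl
            intro i _
            ring
          rw [hprod, hsum, efn_add, ← efn_nat_pow, hγdef, hζdef]
          ring
  have hsum_swap : ∀ K : ℕ, ∑ k ∈ Finset.range K, ((W k : ℝ) : ℂ)
      = ∑ j ∈ J, γ j * ∑ k ∈ Finset.range K, ζ j ^ k := by
    intro K
    rw [Finset.sum_congr rfl (fun k _ => W_eq k), Finset.sum_comm]
    apply Finset.sum_congr rfl
    intro j _
    rw [Finset.mul_sum]
  have hj₀J : j₀ ∈ J := by
    rw [hJ]
    apply Fintype.mem_piFinset.mpr
    intro i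
    simp only [hj₀def]
    exact Finset.mem_range.mpr (by omega)
  have hζ0 : ζ j₀ = 1 := by
    rw [hζdef]
    simp only [hβ, hj₀def]
    simp [efn_zero]
  have hγ0 : γ j₀ = ((κ : ℝ) : ℂ) := by
    rw [hγdef, hκ]
    simp only [hj₀def]
    rw [show (∑ _i : Fin d, ((n:ℝ) - (n:ℝ))) = 0 by simp]
    rw [zero_mul, efn_zero, mul_one, Finset.prod_const, Finset.card_univ, Fintype.card_fin]
    push_cast
    rw [div_pow, div_pow, one_pow]
    ring
  have hζne : ∀ j ∈ J, j ≠ j₀ → ζ j ≠ 1 := by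
    intro j hjJ hne h1
    rw [hζdef] at h1
    obtain ⟨z, hz⟩ := (efn_eq_one_iff _).mp h1
    set a : Fin d → ℤ := fun i => (j i : ℤ) - n with ha
    refine hθ a ?_ z ?_
    · obtain ⟨i, hi⟩ := Function.ne_iff.mp hne
      refine Function.ne_iff.mpr ⟨i, ?_⟩
      simp only [ha, Pi.zero_apply, sub_ne_zero]
      exact_mod_cast hi
    · rw [show ∑ i, ((a i : ℝ)) * θ i = β j by
        apply Finset.sum_congr rfl
        intro i _
        simp [ha]]
      rw [← hz]
  set Bc : ℝ := ∑ j ∈ J.erase j₀, ‖γ j‖ * (2 / ‖ζ j - 1‖) with hBc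
  have hbound : ∀ K : ℕ, κ * K - Bc ≤ ∑ k ∈ Finset.range K, W k := by
    intro K
    have h1 : ((∑ k ∈ Finset.range K, W k : ℝ) : ℂ) - (κ : ℂ) * K
        = ∑ j ∈ J.erase j₀, γ j * ∑ k ∈ Finset.range K, ζ j ^ k := by
      push_cast
      rw [hsum_swap K, ← Finset.add_sum_erase J _ hj₀J, hζ0, hγ0]
      simp only [one_pow, Finset.sum_const, Finset.card_range, nsmul_eq_mul, mul_one]
      push_cast
      ring
    have h2 : ‖((∑ k ∈ Finset.range K, W k : ℝ) : ℂ) - (κ : ℂ) * K‖ ≤ Bc := by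
      rw [h1, hBc]
      refine (norm_sum_le _ _).trans ?_
      apply Finset.sum_le_sum
      intro j hj
      obtain ⟨hne, hjJ⟩ := Finset.mem_erase.mp hj
      rw [norm_mul]
      exact mul_le_mul_of_nonneg_left
        (geom_bound (ζ j) (hζne j hjJ hne) (efn_abs _) K) (norm_nonneg _)
    have h3 : |(∑ k ∈ Finset.range K, W k) - κ * K| ≤ Bc := by
      have : (((∑ k ∈ Finset.range K, W k) - κ * K : ℝ) : ℂ)
          = ((∑ k ∈ Finset.range K, W k : ℝ) : ℂ) - (κ : ℂ) * K := by push_cast; ring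
      rw [← Real.norm_eq_abs, ← Complex.norm_real, this]
      exact h2
    linarith [(abs_le.mp h3).1]
  -- contradiction
  by_contra hinf
  rw [Set.not_infinite] at hinf
  obtain ⟨k₀, hk₀⟩ := hinf.bddAbove
  have hbadge : ∀ k : ℕ, k₀ < k → W k ≤ ρ ^ n := by
    intro k hk
    apply hbad
    by_contra hno
    push_neg at hno
    have hkS : k ∈ {k : ℕ | ∀ i, Int.fract ((k : ℝ) * θ i) ∈ Set.Ioo (1 - ε) 1} := by
      intro i
      have hi := hno i
      set y : ℝ := (k:ℝ) * θ i - c with hy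
      set e : ℝ := y - round y with he
      have he' : |e| < δ := hi
      have hlt := (abs_lt.mp he').2
      have hgt := (abs_lt.mp he').1
      have hx : (k:ℝ) * θ i = (round y : ℤ) + (e + (1 - δ)) := by
        rw [he, hy, hc]
        push_cast
        ring
      have hmem : Int.fract ((k:ℝ) * θ i) = e + (1 - δ) := by
        rw [hx, Int.fract_intCast_add, Int.fract_eq_self.mpr ⟨by linarith, by linarith⟩]
      rw [hmem]
      constructor
      · rw [hδ] at hlt hgt ⊢; linarith
      · linarith
    exact absurd (hk₀ hkS) (by omega)
  have hsplit : ∀ K : ℕ, k₀ + 1 ≤ K →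
      ∑ k ∈ Finset.range K, W k ≤ (k₀ + 1 : ℝ) + K * ρ ^ n := by
    intro K hK
    rw [Finset.range_eq_Ico, ← Finset.sum_Ico_consecutive _ (Nat.zero_le (k₀+1)) hK]
    have hfirst : ∑ k ∈ Finset.Ico 0 (k₀+1), W k ≤ (k₀ + 1 : ℝ) := by
      have := Finset.sum_le_card_nsmul (Finset.Ico 0 (k₀+1)) W 1 (fun k _ => hW1 k)
      simpa [Nat.card_Ico, smul_eq_mul] using this
    have hsecond : ∑ k ∈ Finset.Ico (k₀+1) K, W k ≤ (K : ℝ) * ρ ^ n := by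
      have h1 := Finset.sum_le_card_nsmul (Finset.Ico (k₀+1) K) W (ρ ^ n)
        (fun k hk => hbadge k (by
          have := (Finset.mem_Ico.mp hk).1
          omega))
      have h2 : ((Finset.Ico (k₀+1) K).card : ℝ) ≤ (K : ℝ) := by
        rw [Nat.card_Ico]
        exact_mod_cast Nat.sub_le _ _
      calc ∑ k ∈ Finset.Ico (k₀+1) K, W k
          ≤ ((Finset.Ico (k₀+1) K).card : ℝ) * ρ ^ n := by
            simpa [smul_eq_mul] using h1
        _ ≤ (K : ℝ) * ρ ^ n := mul_le_mul_of_nonneg_right h2 (pow_nonneg hρ0 n)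
    linarith
  obtain ⟨K', hK'⟩ := exists_nat_gt ((k₀ + 1 + Bc) / (κ - ρ ^ n))
  set K : ℕ := max K' (k₀ + 1) with hK
  have hK1 : k₀ + 1 ≤ K := le_max_right _ _
  have hK2 : (K' : ℝ) ≤ K := by exact_mod_cast le_max_left K' (k₀ + 1)
  have hKb : k₀ + 1 + Bc < (κ - ρ ^ n) * K := by
    rw [← div_lt_iff₀' hκρ']
    calc (k₀ + 1 + Bc) / (κ - ρ ^ n) < (K' : ℝ) := hK'
      _ ≤ K := hK2
  have h1 := hbound K
  have h2 := hsplit K hK1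
  have hKρ : (K:ℝ) * ρ ^ n = ρ ^ n * K := by ring
  nlinarith [h1, h2, hKb]

theorem stmt_16 (m : ℕ) (n : Fin m → ℕ) (hinj : Function.Injective n)
    (hsf : ∀ i, Squarefree (n i)) (hgt : ∀ i, 1 < n i)
    (r : ℕ) (hr : r.Prime) (hnd : ∀ i, ¬ r ∣ n i) (ε : ℝ) (hε : 0 < ε) :
    {k : ℕ | ∀ i, Int.fract ((k : ℝ) * Real.sqrt r * Real.sqrt (n i)) ∈
      Set.Ioo (1 - ε) 1}.Infinite := by
  set ε' : ℝ := min ε (1/2) with hε'def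
  have hε'0 : 0 < ε' := lt_min hε (by norm_num)
  have hε'2 : ε' ≤ 1/2 := min_le_right _ _
  have hε'ε : ε' ≤ ε := min_le_left _ _
  set N : Fin m → ℕ := fun i => r * n i with hN
  have hNsf : ∀ i, Squarefree (N i) := by
    intro i
    rw [hN]
    exact Nat.squarefree_mul_iff.mpr
      ⟨(hr.coprime_iff_not_dvd).mpr (hnd i), hr.squarefree, hsf i⟩
  have hN1 : ∀ i, 1 < N i := by
    intro i
    have h1 := hr.two_le
    have h2 := hgt i
    have h3 : 2 * 2 ≤ r * n i := Nat.mul_le_mul h1 h2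
    show 1 < r * n i
    omega
  have hNinj : Function.Injective N := by
    intro a b h
    rw [hN] at h
    exact hinj (Nat.eq_of_mul_eq_mul_left hr.pos h)
  set θ : Fin m → ℝ := fun i => Real.sqrt r * Real.sqrt (n i) with hθdef
  have hsqrtN : ∀ i, Real.sqrt (N i) = θ i := by
    intro i
    rw [hθdef, hN]
    push_cast
    rw [Real.sqrt_mul (by positivity)]
  have hθ : ∀ a : Fin m → ℤ, a ≠ 0 → ∀ z : ℤ, ∑ i, (a i : ℝ) * θ i ≠ (z : ℝ) := by
    intro a ha z h
    apply sqrt_combo_not_int m N hNsf hN1 hNinj a ha z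
    rw [← h]
    apply Finset.sum_congr rfl
    intro i _
    rw [hsqrtN i]
  have hkron := kron m θ hθ ε' hε'0 hε'2
  apply hkron.mono
  intro k hk
  intro i
  have hki := hk i
  have harr : (k : ℝ) * Real.sqrt r * Real.sqrt (n i) = (k : ℝ) * θ i := by
    rw [hθdef]; ring
  rw [harr]
  exact Set.Ioo_subset_Ioo (by linarith) le_rfl hki
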